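/- Suppose a nonnegative sequence {B(t)} satisfies B(t+1) ≤ βB(t) + dα(t) for all t ≥ 0, where β ∈ (0,1), d > 0, and {α(t)} is a non-increasing positive sequence. Then for all t ≥ 2: B(t) ≤ (d/(1-β))·α(⌊t/2⌋) + β^t B(0) + (β^{t/2}d/(1-β))·α(0). -/

import Mathlib

private lemma geo_le (β : ℝ) (h0 : 0 ≤ β) (h1 : β < 1) (n : ℕ) :
    ∑ i ∈ Finset.range n, β ^ i ≤ 1 / (1 - β) := by
  have hne : β ≠ 1 := ne_of_lt h1
  rw [geom_sum_eq hne]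
  have hpos : 0 < 1 - β := by linarith
  have : (β ^ n - 1) / (β - 1) = (1 - β ^ n) / (1 - β) := by
    rw [div_eq_div_iff (by linarith) (by linarith)]; ring
  rw [this]
  have hn : 1 - β ^ n ≤ 1 := by nlinarith [pow_nonneg h0 n]
  exact (div_le_div_iff_of_pos_right hpos).mpr hn

private lemma alpha_anti (α : ℕ → ℝ) (hαmono : ∀ t, α (t + 1) ≤ α t) :
    ∀ i j : ℕ, i ≤ j → α j ≤ α i := by
  intro i j hij
  induction j with
  | zero => simp_all
  | succ n ih =>
    rcases Nat.eq_or_lt_of_le hij with h | h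
    · simp [h]
    · exact le_trans (hαmono n) (ih (Nat.lt_succ_iff.mp h))

private lemma unroll (β d : ℝ) (α : ℕ → ℝ) (B : ℕ → ℝ)
    (hrec : ∀ t, B (t + 1) ≤ β * B t + d * α t) (hβ0 : 0 < β) :
    ∀ t, B t ≤ β ^ t * B 0 + d * ∑ k ∈ Finset.range t, β ^ (t - 1 - k) * α k := by
  intro t
  induction t with
  | zero => simp
  | succ n ih =>
    have h1 : B (n + 1) ≤ β * B n + d * α n := hrec n
    have h2 : β * B n ≤ β * (β ^ n * B 0 + d * ∑ k ∈ Finset.range n, β ^ (n - 1 - k) * α k) :=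
      mul_le_mul_of_nonneg_left ih hβ0.le
    have h3 : β * ∑ k ∈ Finset.range n, β ^ (n - 1 - k) * α k
        = ∑ k ∈ Finset.range n, β ^ (n - k) * α k := by
      rw [Finset.mul_sum]
      apply Finset.sum_congr rfl
      intro k hk
      have hk' : k < n := Finset.mem_range.mp hk
      have : n - k = (n - 1 - k) + 1 := by omega
      rw [this, pow_succ]
      ring
    have h4 : ∑ k ∈ Finset.range (n + 1), β ^ (n + 1 - 1 - k) * α k
        = ∑ k ∈ Finset.range n, β ^ (n - k) * α k + α n := by
      rw [Finset.sum_range_succ]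
      simp
    calc B (n + 1) ≤ β * B n + d * α n := h1
      _ ≤ β * (β ^ n * B 0 + d * ∑ k ∈ Finset.range n, β ^ (n - 1 - k) * α k) + d * α n := by
          linarith
      _ = β ^ (n + 1) * B 0 + d * (β * ∑ k ∈ Finset.range n, β ^ (n - 1 - k) * α k + α n) := by
          ring
      _ = β ^ (n + 1) * B 0 + d * ∑ k ∈ Finset.range (n + 1), β ^ (n + 1 - 1 - k) * α k := by
          rw [h3, h4]

theorem consensus_error_estimate
    (β d : ℝ) (hβ : β ∈ Set.Ioo (0 : ℝ) 1) (hd : 0 < d)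
    (α : ℕ → ℝ) (hαpos : ∀ t, 0 < α t) (hαmono : ∀ t, α (t + 1) ≤ α t)
    (B : ℕ → ℝ) (hB : ∀ t, 0 ≤ B t)
    (hrec : ∀ t, B (t + 1) ≤ β * B t + d * α t) :
    ∀ t : ℕ, 2 ≤ t →
      B t ≤ d / (1 - β) * α (t / 2) + β ^ t * B 0
        + β ^ ((t : ℝ) / 2) * d / (1 - β) * α 0 := by
  obtain ⟨hβ0, hβ1⟩ := hβ
  intro t ht
  set m := t / 2 with hm
  have hmt : m ≤ t := Nat.div_le_self t 2
  have h1β : 0 < 1 - β := by linarith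
  -- unrolled bound
  have hu := unroll β d α B hrec hβ0 t
  -- split the sum
  have hsplit : ∑ k ∈ Finset.range t, β ^ (t - 1 - k) * α k
      = (∑ k ∈ Finset.range m, β ^ (t - 1 - k) * α k)
        + ∑ k ∈ Finset.Ico m t, β ^ (t - 1 - k) * α k := by
    rw [Finset.range_eq_Ico, ← Finset.sum_Ico_consecutive _ (Nat.zero_le m) hmt, Finset.range_eq_Ico]
  -- tail bound
  have htail : ∑ k ∈ Finset.Ico m t, β ^ (t - 1 - k) * α k ≤ α m * (1 / (1 - β)) := by
    have step1 : ∑ k ∈ Finset.Ico m t, β ^ (t - 1 - k) * α k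
        ≤ ∑ k ∈ Finset.Ico m t, β ^ (t - 1 - k) * α m := by
      apply Finset.sum_le_sum
      intro k hk
      have hk' := (Finset.mem_Ico.mp hk).1
      exact mul_le_mul_of_nonneg_left (alpha_anti α hαmono m k hk') (by positivity)
    have step2 : ∑ k ∈ Finset.Ico m t, β ^ (t - 1 - k) * α m
        = (∑ k ∈ Finset.Ico m t, β ^ (t - 1 - k)) * α m := by
      rw [Finset.sum_mul]
    have step3 : ∑ k ∈ Finset.Ico m t, β ^ (t - 1 - k) = ∑ j ∈ Finset.range (t - m), β ^ j := by
      rw [Finset.sum_Ico_eq_sum_range]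
      rw [← Finset.sum_range_reflect (fun j => β ^ j) (t - m)]
      apply Finset.sum_congr rfl
      intro j hj
      have hj' : j < t - m := Finset.mem_range.mp hj
      congr 1
      omega
    have step4 : ∑ j ∈ Finset.range (t - m), β ^ j ≤ 1 / (1 - β) :=
      geo_le β hβ0.le hβ1 _
    calc ∑ k ∈ Finset.Ico m t, β ^ (t - 1 - k) * α k
        ≤ (∑ k ∈ Finset.Ico m t, β ^ (t - 1 - k)) * α m := by rw [← step2]; exact step1
      _ ≤ (1 / (1 - β)) * α m := by
          apply mul_le_mul_of_nonneg_right _ (hαpos m).le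
          rw [step3]; exact step4
      _ = α m * (1 / (1 - β)) := by ring
  -- head bound
  have hhead : ∑ k ∈ Finset.range m, β ^ (t - 1 - k) * α k
      ≤ α 0 * (β ^ (t - m) * (1 / (1 - β))) := by
    have step1 : ∑ k ∈ Finset.range m, β ^ (t - 1 - k) * α k
        ≤ ∑ k ∈ Finset.range m, β ^ (t - m) * β ^ (m - 1 - k) * α 0 := by
      apply Finset.sum_le_sum
      intro k hk
      have hk' : k < m := Finset.mem_range.mp hk
      have he : β ^ (t - 1 - k) = β ^ (t - m) * β ^ (m - 1 - k) := by
        rw [← pow_add]; congr 1; omega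
      rw [he]
      exact mul_le_mul_of_nonneg_left (alpha_anti α hαmono 0 k (Nat.zero_le k)) (by positivity)
    have step2 : ∑ k ∈ Finset.range m, β ^ (t - m) * β ^ (m - 1 - k) * α 0
        = β ^ (t - m) * (∑ k ∈ Finset.range m, β ^ (m - 1 - k)) * α 0 := by
      simp [Finset.sum_mul, Finset.mul_sum]
    have step3 : ∑ k ∈ Finset.range m, β ^ (m - 1 - k) = ∑ j ∈ Finset.range m, β ^ j :=
      Finset.sum_range_reflect (fun j => β ^ j) m
    have step4 : ∑ j ∈ Finset.range m, β ^ j ≤ 1 / (1 - β) := geo_le β hβ0.le hβ1 m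
    calc ∑ k ∈ Finset.range m, β ^ (t - 1 - k) * α k
        ≤ β ^ (t - m) * (∑ k ∈ Finset.range m, β ^ (m - 1 - k)) * α 0 := by
          rw [← step2]; exact step1
      _ ≤ β ^ (t - m) * (1 / (1 - β)) * α 0 := by
          apply mul_le_mul_of_nonneg_right _ (hαpos 0).le
          apply mul_le_mul_of_nonneg_left _ (by positivity)
          rw [step3]; exact step4
      _ = α 0 * (β ^ (t - m) * (1 / (1 - β))) := by ring
  -- β^(t-m) ≤ β^(t/2) as rpow
  have hpow : (β : ℝ) ^ (t - m : ℕ) ≤ β ^ ((t : ℝ) / 2) := by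
    rw [← Real.rpow_natCast β (t - m)]
    apply Real.rpow_le_rpow_of_exponent_ge hβ0 hβ1.le
    have h2m : 2 * m ≤ t := by omega
    have : ((t - m : ℕ) : ℝ) = (t : ℝ) - m := by
      push_cast [Nat.cast_sub hmt]; ring
    rw [this]
    have : (m : ℝ) ≤ (t : ℝ) / 2 := by
      have : (2 : ℝ) * m ≤ t := by exact_mod_cast h2m
      linarith
    linarith
  -- combine
  have hcomb : B t ≤ β ^ t * B 0
      + d * (α 0 * (β ^ (t - m) * (1 / (1 - β))) + α m * (1 / (1 - β))) := by
    calc B t ≤ β ^ t * B 0 + d * ∑ k ∈ Finset.range t, β ^ (t - 1 - k) * α k := hu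
      _ ≤ β ^ t * B 0 + d * (α 0 * (β ^ (t - m) * (1 / (1 - β))) + α m * (1 / (1 - β))) := by
          rw [hsplit]
          have := add_le_add hhead htail
          nlinarith [this]
  have hα0 : 0 < α 0 := hαpos 0
  have hmul := mul_le_mul_of_nonneg_left hpow (by positivity : (0:ℝ) ≤ d * α 0 / (1 - β))
  calc B t ≤ β ^ t * B 0
      + d * (α 0 * (β ^ (t - m) * (1 / (1 - β))) + α m * (1 / (1 - β))) := hcomb
    _ ≤ d / (1 - β) * α m + β ^ t * B 0 + β ^ ((t : ℝ) / 2) * d / (1 - β) * α 0 := by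
        have e1 : d * (α 0 * (β ^ (t - m) * (1 / (1 - β))))
            = d * α 0 / (1 - β) * β ^ (t - m) := by ring
        have e2 : β ^ ((t : ℝ) / 2) * d / (1 - β) * α 0
            = d * α 0 / (1 - β) * β ^ ((t : ℝ) / 2) := by ring
        have e3 : d * (α m * (1 / (1 - β))) = d / (1 - β) * α m := by ring
        nlinarith [hmul]
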